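/- For positive semidefinite matrices B and C of the same size and a real number 0 < q ≤ 1, tr((B + C)^q) ≤ tr(B^q) + tr(C^q). -/

import Mathlib

open Matrix
open scoped MatrixOrder
variable {n : ℕ}
namespace McCarthy
set_option maxHeartbeats 1600000


lemma diag_eq_dot (M : Matrix (Fin n) (Fin n) ℝ) (i : Fin n) :
    M i i = Pi.single i 1 ⬝ᵥ M *ᵥ Pi.single i 1 := by
  rw [single_dotProduct, one_mul, mulVec_single]
  simp

lemma posSemidef_dot {M : Matrix (Fin n) (Fin n) ℝ} (hM : M.PosSemidef) (x : Fin n → ℝ) :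
    0 ≤ x ⬝ᵥ M *ᵥ x := by
  simpa using hM.dotProduct_mulVec_nonneg x

lemma trace_nonneg_of_posSemidef {M : Matrix (Fin n) (Fin n) ℝ} (hM : M.PosSemidef) :
    0 ≤ M.trace := by
  rw [Matrix.trace]
  apply Finset.sum_nonneg
  intro i _
  rw [Matrix.diag_apply, diag_eq_dot M i]
  exact posSemidef_dot hM _

lemma trace_mul_nonneg {X Y : Matrix (Fin n) (Fin n) ℝ} (hX : X.PosSemidef) (hY : Y.PosSemidef) :
    0 ≤ (X * Y).trace := by
  have hS := (CFC.sqrt_nonneg X).posSemidef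
  have hSS : CFC.sqrt X * CFC.sqrt X = X := CFC.sqrt_mul_sqrt_self X hX.nonneg
  have h1 : (CFC.sqrt X * Y * CFC.sqrt X).trace = (X * Y).trace := by
    rw [Matrix.trace_mul_cycle, hSS]
  rw [← h1]
  have : (CFC.sqrt X * Y * CFC.sqrt X).PosSemidef := by
    have := hY.mul_mul_conjTranspose_same (CFC.sqrt X)
    rwa [hS.isHermitian.eq] at this
  exact trace_nonneg_of_posSemidef this



lemma transpose_eq {M : Matrix (Fin n) (Fin n) ℝ} (hM : M.IsHermitian) : Mᵀ = M := by
  rw [← conjTranspose_eq_transpose_of_trivial]; exact hM.eq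

lemma sym_dot {M : Matrix (Fin n) (Fin n) ℝ} (hM : M.IsHermitian) (x y : Fin n → ℝ) :
    x ⬝ᵥ M *ᵥ y = (M *ᵥ x) ⬝ᵥ y := by
  rw [dotProduct_mulVec]
  congr 1
  rw [← mulVec_transpose, transpose_eq hM]

lemma mul_inv_cancel {M : Matrix (Fin n) (Fin n) ℝ} (hM : M.PosDef) : M * M⁻¹ = 1 :=
  Matrix.mul_nonsing_inv M (isUnit_iff_ne_zero.2 hM.det_pos.ne')

lemma inv_cancel_mulVec {M : Matrix (Fin n) (Fin n) ℝ} (hM : M.PosDef) (v : Fin n → ℝ) :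
    M *ᵥ (M⁻¹ *ᵥ v) = v := by
  rw [mulVec_mulVec, mul_inv_cancel hM, one_mulVec]

/-- variational lower bound for the inverse quadratic form -/
lemma inv_dot_ge {M : Matrix (Fin n) (Fin n) ℝ} (hM : M.PosDef) (v w : Fin n → ℝ) :
    2 * (v ⬝ᵥ w) - w ⬝ᵥ M *ᵥ w ≤ v ⬝ᵥ M⁻¹ *ᵥ v := by
  set a := M⁻¹ *ᵥ v with ha
  have h0 : 0 ≤ (a - w) ⬝ᵥ M *ᵥ (a - w) := posSemidef_dot hM.posSemidef _
  have hMa : M *ᵥ a = v := inv_cancel_mulVec hM v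
  have hexp : (a - w) ⬝ᵥ M *ᵥ (a - w)
      = v ⬝ᵥ a - 2 * (v ⬝ᵥ w) + w ⬝ᵥ M *ᵥ w := by
    rw [mulVec_sub, sub_dotProduct, dotProduct_sub, dotProduct_sub,
      sym_dot hM.isHermitian a w, sym_dot hM.isHermitian a a, hMa,
      dotProduct_comm w v]
    ring
  rw [hexp] at h0
  have : v ⬝ᵥ M⁻¹ *ᵥ v = v ⬝ᵥ a := rfl
  rw [this]
  linarith


lemma trace_inv_antitone {M N : Matrix (Fin n) (Fin n) ℝ} (hM : M.PosDef) (hN : N.PosDef)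
    (h : (N - M).PosSemidef) : N⁻¹.trace ≤ M⁻¹.trace := by
  rw [Matrix.trace, Matrix.trace]
  apply Finset.sum_le_sum
  intro i _
  rw [Matrix.diag_apply, Matrix.diag_apply, diag_eq_dot N⁻¹ i, diag_eq_dot M⁻¹ i]
  set e := (Pi.single i 1 : Fin n → ℝ) with he
  set w := N⁻¹ *ᵥ e with hw
  have hNw : N *ᵥ w = e := inv_cancel_mulVec hN e
  have h1 : w ⬝ᵥ N *ᵥ w = e ⬝ᵥ w := by rw [hNw, dotProduct_comm]
  have h2 : w ⬝ᵥ M *ᵥ w ≤ w ⬝ᵥ N *ᵥ w := by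
    have h3 := posSemidef_dot h w
    rw [sub_mulVec, dotProduct_sub] at h3
    linarith
  have h3 := inv_dot_ge hM e w
  have h4 : e ⬝ᵥ N⁻¹ *ᵥ e = e ⬝ᵥ w := rfl
  rw [h4]
  linarith

lemma trace_unitary_conj (U : Matrix.unitaryGroup (Fin n) ℝ) (D : Matrix (Fin n) (Fin n) ℝ) :
    ((U : Matrix (Fin n) (Fin n) ℝ) * D * star (U : Matrix (Fin n) (Fin n) ℝ)).trace = D.trace := by
  rw [Matrix.trace_mul_cycle, Unitary.coe_star_mul_self, one_mul]

lemma trace_inv_add_smul {X : Matrix (Fin n) (Fin n) ℝ} (hX : X.PosSemidef) {s : ℝ}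
    (hs : 0 < s) :
    (X + s • 1)⁻¹.trace = ∑ i, (hX.isHermitian.eigenvalues i + s)⁻¹ := by
  classical
  set U : Matrix (Fin n) (Fin n) ℝ := (Matrix.IsHermitian.eigenvectorUnitary hX.isHermitian :
    Matrix (Fin n) (Fin n) ℝ) with hU
  have hUU : star U * U = 1 := Unitary.coe_star_mul_self _
  have hUU' : U * star U = 1 := Unitary.coe_mul_star_self _
  set d : Fin n → ℝ := fun i => hX.isHermitian.eigenvalues i + s with hd
  have hd0 : ∀ i, d i ≠ 0 := fun i => (lt_of_lt_of_le hs (by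
    have := hX.eigenvalues_nonneg i; simp [hd]; linarith)).ne'
  have hdecomp : X + s • 1 = U * diagonal d * star U := by
    conv_lhs => rw [hX.isHermitian.spectral_theorem, Unitary.conjStarAlgAut_apply]
    have h1 : (s • 1 : Matrix (Fin n) (Fin n) ℝ) = U * (s • 1) * star U := by
      rw [Matrix.mul_smul, mul_one, Matrix.smul_mul, hUU']
    rw [h1, ← Matrix.add_mul, ← Matrix.mul_add]
    congr 2
    rw [Matrix.smul_one_eq_diagonal, diagonal_add]
    congr 1
  have hinv : (X + s • 1)⁻¹ = U * diagonal (fun i => (d i)⁻¹) * star U := by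
    rw [hdecomp]
    apply Matrix.inv_eq_right_inv
    have hdd : diagonal d * diagonal (fun i => (d i)⁻¹) = 1 := by
      rw [diagonal_mul_diagonal]
      have : (fun i => d i * (d i)⁻¹) = fun _ => (1:ℝ) := funext fun i => mul_inv_cancel₀ (hd0 i)
      rw [this, diagonal_one]
    simp only [mul_assoc]
    rw [← mul_assoc (star U) U, hUU, one_mul, ← mul_assoc (diagonal d), hdd, one_mul, hUU']
  rw [hinv, trace_unitary_conj ⟨_, (Matrix.IsHermitian.eigenvectorUnitary hX.isHermitian).2⟩,
    Matrix.trace_diagonal]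



lemma posSemidef_smul {M : Matrix (Fin n) (Fin n) ℝ} (hM : M.PosSemidef) {a : ℝ} (ha : 0 ≤ a) :
    (a • M).PosSemidef := by
  refine Matrix.PosSemidef.of_dotProduct_mulVec_nonneg ?_ fun x => ?_
  · rw [Matrix.IsHermitian, conjTranspose_smul, star_trivial, hM.1.eq]
  · rw [smul_mulVec, dotProduct_smul, smul_eq_mul]
    exact mul_nonneg ha (hM.dotProduct_mulVec_nonneg x)

lemma posDef_smul_one {s : ℝ} (hs : 0 < s) : ((s • 1 : Matrix (Fin n) (Fin n) ℝ)).PosDef := by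
  rw [Matrix.smul_one_eq_diagonal]
  exact Matrix.posDef_diagonal_iff.mpr fun _ => hs

lemma isHermitian_smul {M : Matrix (Fin n) (Fin n) ℝ} (hM : M.IsHermitian) (a : ℝ) :
    (a • M).IsHermitian := by
  rw [Matrix.IsHermitian, conjTranspose_smul, star_trivial, hM.eq]



lemma posDef_add_smul_one {B : Matrix (Fin n) (Fin n) ℝ} (hB : B.PosSemidef) {s : ℝ}
    (hs : 0 < s) : (B + s • 1).PosDef := by
  have := (posDef_smul_one (n := n) hs).add_posSemidef hB
  rwa [add_comm] at this

lemma inv_mul_cancel_mat {M : Matrix (Fin n) (Fin n) ℝ} (hM : M.PosDef) : M⁻¹ * M = 1 :=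
  Matrix.nonsing_inv_mul M (isUnit_iff_ne_zero.2 hM.det_pos.ne')

lemma key_s {B C : Matrix (Fin n) (Fin n) ℝ} (hB : B.PosSemidef) (hC : C.PosSemidef)
    {s : ℝ} (hs : 0 < s) :
    s * (B + s • 1)⁻¹.trace + s * (C + s • 1)⁻¹.trace - s * (B + C + s • 1)⁻¹.trace ≤ (n : ℝ) := by
  classical
  set P : Matrix (Fin n) (Fin n) ℝ := B + s • 1 with hPdef
  set Q : Matrix (Fin n) (Fin n) ℝ := C + s • 1 with hQdef
  set T : Matrix (Fin n) (Fin n) ℝ := B + C + s • 1 with hTdef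
  have hPd : P.PosDef := posDef_add_smul_one hB hs
  have hQd : Q.PosDef := posDef_add_smul_one hC hs
  have hTd : T.PosDef := posDef_add_smul_one (hB.add hC) hs
  have hPP : P * P⁻¹ = 1 := mul_inv_cancel hPd
  have hPP' : P⁻¹ * P = 1 := inv_mul_cancel_mat hPd
  have hTT : T * T⁻¹ = 1 := mul_inv_cancel hTd
  have hTT' : T⁻¹ * T = 1 := inv_mul_cancel_mat hTd
  obtain ⟨K, hKh, hKK⟩ : ∃ K : Matrix (Fin n) (Fin n) ℝ, K.IsHermitian ∧ K * K = C :=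
    ⟨CFC.sqrt C, (CFC.sqrt_nonneg C).posSemidef.isHermitian, CFC.sqrt_mul_sqrt_self C hC.nonneg⟩
  have hPinv : P⁻¹.PosDef := hPd.inv
  have hPih : P⁻¹.IsHermitian := hPinv.isHermitian
  set G : Matrix (Fin n) (Fin n) ℝ := K * P⁻¹ * K with hGdef
  have hG : G.PosSemidef := by
    have := hPinv.posSemidef.mul_mul_conjTranspose_same K
    rwa [hKh.eq] at this
  have h1G : (1 + G).PosDef := Matrix.PosDef.add_posSemidef Matrix.PosDef.one hG
  have h1Gi : (1 + G)⁻¹.PosDef := h1G.inv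
  have h1GG : (1 + G) * (1 + G)⁻¹ = 1 := mul_inv_cancel h1G
  have h1GG' : (1 + G)⁻¹ * (1 + G) = 1 := inv_mul_cancel_mat h1G
  have hTP : T = P + C := by rw [hTdef, hPdef]; abel
  -- resolvent identity
  have hres : P⁻¹ - T⁻¹ = P⁻¹ * C * T⁻¹ := by
    have e0 : P⁻¹ * (T - P) * T⁻¹ = P⁻¹ - T⁻¹ := by
      rw [Matrix.mul_sub, Matrix.sub_mul, Matrix.mul_assoc, hTT, mul_one, hPP', one_mul]
    have e1 : T - P = C := by rw [hTP]; abel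
    rw [← e0, e1]
  have hKT : K * T⁻¹ = (1 + G)⁻¹ * (K * P⁻¹) := by
    have h2 : (1 + G) * (K * T⁻¹) = K * P⁻¹ := by
      have e2 : (1 + G) * (K * T⁻¹) = K * T⁻¹ + K * (P⁻¹ * C * T⁻¹) := by
        rw [Matrix.add_mul, one_mul, hGdef, ← hKK]
        congr 1
        simp only [Matrix.mul_assoc]
      rw [e2, ← hres, Matrix.mul_sub]
      abel
    calc K * T⁻¹ = (1 + G)⁻¹ * ((1 + G) * (K * T⁻¹)) := by
          rw [← Matrix.mul_assoc, h1GG', one_mul]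
      _ = (1 + G)⁻¹ * (K * P⁻¹) := by rw [h2]
  set H : Matrix (Fin n) (Fin n) ℝ := K * P⁻¹ * P⁻¹ * K with hHdef
  have htrace1 : (P⁻¹).trace - (T⁻¹).trace = (P⁻¹ * C * T⁻¹).trace := by
    rw [← trace_sub, hres]
  have htrace2 : (P⁻¹ * C * T⁻¹).trace = (H * (1 + G)⁻¹).trace := by
    have e1 : P⁻¹ * C * T⁻¹ = (P⁻¹ * K) * (K * T⁻¹) := by
      rw [← hKK]; simp only [Matrix.mul_assoc]
    rw [e1, hKT, ← Matrix.mul_assoc, Matrix.trace_mul_cycle]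
    congr 1
    rw [hHdef]
    simp only [Matrix.mul_assoc]
  have hGH : (G - s • H).PosSemidef := by
    have hB_eq : P - s • 1 = B := by rw [hPdef]; abel
    have e2 : G - s • H = (K * P⁻¹) * B * (K * P⁻¹)ᴴ := by
      rw [conjTranspose_mul, hKh.eq, hPih.eq, ← hB_eq]
      have e3 : K * P⁻¹ * P * (P⁻¹ * K) = G := by
        rw [Matrix.mul_assoc (K * P⁻¹) P (P⁻¹ * K), ← Matrix.mul_assoc P P⁻¹ K, hPP, one_mul,
          hGdef]
      have e4 : K * P⁻¹ * (s • (1 : Matrix (Fin n) (Fin n) ℝ)) * (P⁻¹ * K) = s • H := by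
        rw [mul_smul_comm, mul_one, Matrix.smul_mul, hHdef, ← Matrix.mul_assoc]
      rw [Matrix.mul_sub, Matrix.sub_mul, e3, e4]
    rw [e2]
    exact hB.mul_mul_conjTranspose_same _
  have step3 : s * (H * (1 + G)⁻¹).trace ≤ (G * (1 + G)⁻¹).trace := by
    have h5 := trace_mul_nonneg hGH h1Gi.posSemidef
    rw [Matrix.sub_mul, Matrix.smul_mul, trace_sub, trace_smul, smul_eq_mul] at h5
    linarith
  have step4 : (G * (1 + G)⁻¹).trace = (n : ℝ) - ((1 + G)⁻¹).trace := by
    have e3 : G * (1 + G)⁻¹ = 1 - (1 + G)⁻¹ := by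
      have e4 : (1 + G) * (1 + G)⁻¹ = (1 + G)⁻¹ + G * (1 + G)⁻¹ := by
        rw [Matrix.add_mul, one_mul]
      rw [h1GG] at e4
      refine eq_sub_of_add_eq ?_
      rw [add_comm]
      exact e4.symm
    rw [e3, trace_sub, trace_one]
    simp
  -- step 5 : comparison
  have hSinv : (0:ℝ) < s⁻¹ := by positivity
  have cancelP : ∀ X : Matrix (Fin n) (Fin n) ℝ, P⁻¹ * (P * X * P) * P⁻¹ = X := by
    intro X
    rw [← Matrix.mul_assoc, ← Matrix.mul_assoc, hPP', one_mul, Matrix.mul_assoc, hPP, mul_one]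
  have hPXP : P * (s⁻¹ • (1:Matrix (Fin n) (Fin n) ℝ) - P⁻¹) * P = s⁻¹ • (B * B) + B := by
    rw [Matrix.mul_sub, mul_smul_comm, mul_one, hPP, Matrix.sub_mul, Matrix.smul_mul, one_mul]
    rw [hPdef, Matrix.add_mul, Matrix.mul_add, Matrix.mul_add, mul_smul_comm, mul_one,
      Matrix.smul_mul, one_mul, Matrix.smul_mul, mul_smul_comm, mul_one]
    match_scalars <;> field_simp <;> ring
  have hinner : (s⁻¹ • (1:Matrix (Fin n) (Fin n) ℝ) - P⁻¹).PosSemidef := by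
    have hBB : (B * B).PosSemidef := by
      have := Matrix.posSemidef_self_mul_conjTranspose B
      rwa [hB.isHermitian.eq] at this
    have hsum : (s⁻¹ • (B * B) + B).PosSemidef :=
      (posSemidef_smul hBB hSinv.le).add hB
    have e5 : s⁻¹ • (1:Matrix (Fin n) (Fin n) ℝ) - P⁻¹
        = P⁻¹ * (s⁻¹ • (B * B) + B) * P⁻¹ᴴ := by
      rw [hPih.eq, ← hPXP, cancelP]
    rw [e5]
    exact hsum.mul_mul_conjTranspose_same _
  have hdiffPSD : ((1 + s⁻¹ • C) - (1 + G)).PosSemidef := by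
    have e6 : (1 + s⁻¹ • C) - (1 + G) = K * (s⁻¹ • (1:Matrix (Fin n) (Fin n) ℝ) - P⁻¹) * Kᴴ := by
      rw [hKh.eq, Matrix.mul_sub, Matrix.sub_mul, hGdef]
      rw [mul_smul_comm, mul_one, Matrix.smul_mul, hKK]
      abel
    rw [e6]
    exact hinner.mul_mul_conjTranspose_same K
  have hQs : (1 + s⁻¹ • C : Matrix (Fin n) (Fin n) ℝ) = s⁻¹ • Q := by
    rw [hQdef, smul_add, smul_smul, inv_mul_cancel₀ hs.ne', one_smul, add_comm]
  have hQsd : (s⁻¹ • Q : Matrix (Fin n) (Fin n) ℝ).PosDef := by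
    rw [← hQs]
    exact Matrix.PosDef.add_posSemidef Matrix.PosDef.one (posSemidef_smul hC hSinv.le)
  have step5 : ((s⁻¹ • Q : Matrix (Fin n) (Fin n) ℝ))⁻¹.trace ≤ ((1 + G)⁻¹).trace := by
    apply trace_inv_antitone h1G hQsd
    rw [← hQs]
    exact hdiffPSD
  have step6 : (s⁻¹ • Q : Matrix (Fin n) (Fin n) ℝ)⁻¹ = s • Q⁻¹ := by
    apply Matrix.inv_eq_right_inv
    rw [Matrix.smul_mul, Matrix.mul_smul, smul_smul, inv_mul_cancel₀ hs.ne']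
    rw [mul_inv_cancel hQd, one_smul]
  rw [step6, trace_smul, smul_eq_mul] at step5
  have hmain : s * ((P⁻¹).trace - (T⁻¹).trace) ≤ (n : ℝ) - s * (Q⁻¹).trace := by
    rw [htrace1, htrace2]
    calc s * (H * (1 + G)⁻¹).trace ≤ (G * (1 + G)⁻¹).trace := step3
      _ = (n : ℝ) - ((1 + G)⁻¹).trace := step4
      _ ≤ (n : ℝ) - s * (Q⁻¹).trace := by linarith
  linarith

-- eigenvalue-form of key_s
lemma eig_sum_eq {X : Matrix (Fin n) (Fin n) ℝ} (hX : X.PosSemidef) {s : ℝ} (hs : 0 < s) :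
    ∑ i, hX.isHermitian.eigenvalues i / (hX.isHermitian.eigenvalues i + s)
      = (n : ℝ) - s * (X + s • 1)⁻¹.trace := by
  rw [trace_inv_add_smul hX hs, Finset.mul_sum]
  have h1 : ∀ i : Fin n, hX.isHermitian.eigenvalues i / (hX.isHermitian.eigenvalues i + s)
      = 1 - s * (hX.isHermitian.eigenvalues i + s)⁻¹ := by
    intro i
    have h0 : hX.isHermitian.eigenvalues i + s ≠ 0 := by
      have := hX.eigenvalues_nonneg i; positivity
    field_simp
    ring
  rw [Finset.sum_congr rfl fun i _ => h1 i, Finset.sum_sub_distrib, Finset.sum_const,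
    Finset.card_univ, Fintype.card_fin, nsmul_eq_mul, mul_one]

lemma eig_s {B C : Matrix (Fin n) (Fin n) ℝ} (hB : B.PosSemidef) (hC : C.PosSemidef)
    {s : ℝ} (hs : 0 < s) :
    ∑ i, (hB.add hC).isHermitian.eigenvalues i / ((hB.add hC).isHermitian.eigenvalues i + s)
      ≤ (∑ i, hB.isHermitian.eigenvalues i / (hB.isHermitian.eigenvalues i + s))
        + ∑ i, hC.isHermitian.eigenvalues i / (hC.isHermitian.eigenvalues i + s) := by
  rw [eig_sum_eq (hB.add hC) hs, eig_sum_eq hB hs, eig_sum_eq hC hs]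
  have := key_s hB hC hs
  linarith

lemma trace_eq_sum_eigenvalues {X : Matrix (Fin n) (Fin n) ℝ} (hX : X.IsHermitian) :
    X.trace = ∑ i, hX.eigenvalues i := by
  conv_lhs => rw [hX.spectral_theorem, Unitary.conjStarAlgAut_apply]
  rw [trace_unitary_conj ⟨_, (Matrix.IsHermitian.eigenvectorUnitary hX).2⟩,
    Matrix.trace_diagonal]
  simp

section analysis
open MeasureTheory Set

noncomputable def Iq (q : ℝ) : ℝ := ∫ s in Ioi (0:ℝ), s ^ (q-1) / (1 + s)

lemma base_measurable (q : ℝ) : Measurable (fun s : ℝ => s ^ (q-1) / (1 + s)) := by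
  exact (measurable_id.pow_const _).div (measurable_const.add measurable_id)

lemma base_integrable {q : ℝ} (hq0 : 0 < q) (hq1 : q < 1) :
    IntegrableOn (fun s : ℝ => s ^ (q-1) / (1 + s)) (Ioi (0:ℝ)) := by
  have h1 : IntegrableOn (fun s : ℝ => s ^ (q-1) / (1 + s)) (Ioc (0:ℝ) 1) := by
    have hbase : IntegrableOn (fun s : ℝ => s ^ (q-1)) (Ioc (0:ℝ) 1) := by
      have h := intervalIntegral.intervalIntegrable_rpow' (a := 0) (b := 1) (r := q-1)
        (by linarith)
      rwa [intervalIntegrable_iff_integrableOn_Ioc_of_le zero_le_one] at h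
    refine Integrable.mono hbase ((base_measurable q).aestronglyMeasurable) ?_
    filter_upwards [ae_restrict_mem measurableSet_Ioc] with s hsmem
    obtain ⟨hs0, hs1⟩ := hsmem
    rw [Real.norm_eq_abs, Real.norm_eq_abs, abs_of_nonneg (by positivity),
      abs_of_nonneg (Real.rpow_nonneg hs0.le _)]
    rw [div_le_iff₀ (by linarith)]
    nlinarith [Real.rpow_nonneg hs0.le (q-1)]
  have h2 : IntegrableOn (fun s : ℝ => s ^ (q-1) / (1 + s)) (Ioi (1:ℝ)) := by
    have hbase : IntegrableOn (fun s : ℝ => s ^ (q-2)) (Ioi (1:ℝ)) :=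
      integrableOn_Ioi_rpow_of_lt (by linarith) one_pos
    refine Integrable.mono hbase ((base_measurable q).aestronglyMeasurable) ?_
    filter_upwards [ae_restrict_mem measurableSet_Ioi] with s hsmem
    have hs1 : (1:ℝ) < s := hsmem
    have hs0 : (0:ℝ) < s := by linarith
    rw [Real.norm_eq_abs, Real.norm_eq_abs, abs_of_nonneg (by positivity),
      abs_of_nonneg (Real.rpow_nonneg hs0.le _)]
    have e1 : s ^ (q-2) = s ^ (q-1) / s := by
      rw [← Real.rpow_sub_one hs0.ne']
      ring_nf
    rw [e1]
    apply div_le_div_of_nonneg_left (Real.rpow_nonneg hs0.le _) hs0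
    linarith
  have := h1.union h2
  rwa [Ioc_union_Ioi_eq_Ioi zero_le_one] at this

lemma Iq_pos {q : ℝ} (hq0 : 0 < q) (hq1 : q < 1) : 0 < Iq q := by
  rw [Iq, setIntegral_pos_iff_support_of_nonneg_ae ?_ (base_integrable hq0 hq1)]
  · have hsub : Ioi (0:ℝ) ⊆ Function.support (fun s : ℝ => s ^ (q-1) / (1 + s)) := by
      intro s hs
      have hs0 : (0:ℝ) < s := hs
      have : 0 < s ^ (q-1) / (1 + s) := by positivity
      exact this.ne'
    rw [Set.inter_eq_right.mpr hsub]
    simp [Real.volume_Ioi]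
  · filter_upwards [ae_restrict_mem measurableSet_Ioi] with s hs
    have hs0 : (0:ℝ) < s := hs
    positivity

lemma F_integrable {q : ℝ} (hq0 : 0 < q) (hq1 : q < 1) {l : ℝ} (hl : 0 ≤ l) :
    IntegrableOn (fun s : ℝ => l / (l + s) * s ^ (q-1)) (Ioi (0:ℝ)) := by
  rcases eq_or_lt_of_le hl with h0 | hpos
  · have : (fun s : ℝ => l / (l + s) * s ^ (q-1)) = fun _ => 0 := by
      funext s; rw [← h0]; simp
    rw [this]
    exact integrableOn_zero
  · have hcomp : IntegrableOn (fun s : ℝ => (l⁻¹ * s) ^ (q-1) / (1 + l⁻¹ * s)) (Ioi (0:ℝ)) := by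
      have := (integrableOn_Ioi_comp_mul_left_iff (fun s : ℝ => s ^ (q-1) / (1 + s)) 0
        (inv_pos.mpr hpos)).mpr
      simpa using this (by simpa using base_integrable hq0 hq1)
    have hsc : IntegrableOn
        (fun s : ℝ => l ^ (q-1) * ((l⁻¹ * s) ^ (q-1) / (1 + l⁻¹ * s))) (Ioi (0:ℝ)) :=
      hcomp.const_mul _
    refine hsc.congr_fun ?_ measurableSet_Ioi
    intro s hs
    have hs0 : (0:ℝ) < s := hs
    have e1 : (l⁻¹ * s) ^ (q-1) = l⁻¹ ^ (q-1) * s ^ (q-1) :=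
      Real.mul_rpow (by positivity) hs0.le
    have e2 : 1 + l⁻¹ * s = (l + s) / l := by field_simp
    have hR : l ^ (q-1) ≠ 0 := (Real.rpow_pos_of_pos hpos _).ne'
    have hls : l + s ≠ 0 := by positivity
    simp only []
    rw [e1, e2, Real.inv_rpow hpos.le]
    field_simp
lemma F_integral {q : ℝ} (hq0 : 0 < q) (hq1 : q < 1) {l : ℝ} (hl : 0 ≤ l) :
    ∫ s in Ioi (0:ℝ), l / (l + s) * s ^ (q-1) = l ^ q * Iq q := by
  rcases eq_or_lt_of_le hl with h0 | hpos
  · have hz : (fun s : ℝ => l / (l + s) * s ^ (q-1)) = fun _ => 0 := by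
      funext s; rw [← h0]; simp
    rw [hz, ← h0, Real.zero_rpow hq0.ne', zero_mul]
    simp
  · have hcm := integral_comp_mul_left_Ioi (fun s : ℝ => l / (l + s) * s ^ (q-1)) 0 hpos
    rw [mul_zero] at hcm
    have hL : (∫ x in Ioi (0:ℝ), l / (l + l * x) * (l * x) ^ (q-1))
        = l ^ (q-1) * Iq q := by
      rw [Iq, ← MeasureTheory.integral_const_mul]
      refine setIntegral_congr_fun measurableSet_Ioi ?_
      intro x hx
      have hx0 : (0:ℝ) < x := hx
      have e1 : (l * x) ^ (q-1) = l ^ (q-1) * x ^ (q-1) := Real.mul_rpow hpos.le hx0.le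
      have e2 : l + l * x = l * (1 + x) := by ring
      have h1x : (0:ℝ) < 1 + x := by linarith
      simp only []
      rw [e1, e2]
      have hl0 : l ≠ 0 := hpos.ne'
      field_simp
    rw [hL, smul_eq_mul] at hcm
    have hmul : l * l ^ (q-1) = l ^ q := by
      have e : (1:ℝ) + (q-1) = q := by ring
      rw [← Real.rpow_one_add' hl (by rw [e]; exact hq0.ne'), e]
    calc (∫ s in Ioi (0:ℝ), l / (l + s) * s ^ (q-1))
        = l * (l⁻¹ * ∫ s in Ioi (0:ℝ), l / (l + s) * s ^ (q-1)) := by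
          rw [← mul_assoc, mul_inv_cancel₀ hpos.ne', one_mul]
      _ = l * (l ^ (q-1) * Iq q) := by rw [← hcm]
      _ = l ^ q * Iq q := by rw [← mul_assoc, hmul]

lemma sum_F_integral {q : ℝ} (hq0 : 0 < q) (hq1 : q < 1)
    {X : Matrix (Fin n) (Fin n) ℝ} (hX : X.PosSemidef) :
    (∑ i, hX.isHermitian.eigenvalues i ^ q) * Iq q
      = ∫ s in Ioi (0:ℝ), ∑ i, hX.isHermitian.eigenvalues i
          / (hX.isHermitian.eigenvalues i + s) * s ^ (q-1) := by
  rw [MeasureTheory.integral_finset_sum _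
    (fun i _ => F_integrable hq0 hq1 (hX.eigenvalues_nonneg i)), Finset.sum_mul]
  exact Finset.sum_congr rfl fun i _ =>
    (F_integral hq0 hq1 (hX.eigenvalues_nonneg i)).symm

end analysis

end McCarthy

/-- For PSD matrices `B`, `C` and real `0 < q ≤ 1`, `tr((B+C)^q) ≤ tr(B^q) + tr(C^q)`,
where `tr(M^q)` for a PSD matrix `M` is defined spectrally as `∑ i, λᵢ(M) ^ q`. -/
theorem trace_rpow_add_le_of_posSemidef {n : ℕ} (B C : Matrix (Fin n) (Fin n) ℝ)
    (hB : B.PosSemidef) (hC : C.PosSemidef) (q : ℝ) (hq0 : 0 < q) (hq1 : q ≤ 1) :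
    ∑ i, (hB.isHermitian.add hC.isHermitian).eigenvalues i ^ q ≤
      ∑ i, hB.isHermitian.eigenvalues i ^ q + ∑ i, hC.isHermitian.eigenvalues i ^ q := by
  open MeasureTheory Set in
  rcases eq_or_lt_of_le hq1 with h1 | hlt
  · subst h1
    simp only [Real.rpow_one]
    rw [← McCarthy.trace_eq_sum_eigenvalues (hB.isHermitian.add hC.isHermitian),
      ← McCarthy.trace_eq_sum_eigenvalues hB.isHermitian,
      ← McCarthy.trace_eq_sum_eigenvalues hC.isHermitian, ← Matrix.trace_add]
  · have hA : (B + C).PosSemidef := hB.add hC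
    have hIpos := McCarthy.Iq_pos hq0 hlt
    set lA := hA.isHermitian.eigenvalues with hlA
    set lB := hB.isHermitian.eigenvalues with hlB
    set lC := hC.isHermitian.eigenvalues with hlC
    have hintA : IntegrableOn (fun s : ℝ => ∑ i, lA i / (lA i + s) * s ^ (q-1)) (Ioi (0:ℝ)) :=
      integrable_finset_sum _ (fun i _ => McCarthy.F_integrable hq0 hlt (hA.eigenvalues_nonneg i))
    have hintB : IntegrableOn (fun s : ℝ => ∑ i, lB i / (lB i + s) * s ^ (q-1)) (Ioi (0:ℝ)) :=
      integrable_finset_sum _ (fun i _ => McCarthy.F_integrable hq0 hlt (hB.eigenvalues_nonneg i))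
    have hintC : IntegrableOn (fun s : ℝ => ∑ i, lC i / (lC i + s) * s ^ (q-1)) (Ioi (0:ℝ)) :=
      integrable_finset_sum _ (fun i _ => McCarthy.F_integrable hq0 hlt (hC.eigenvalues_nonneg i))
    have hmono : (∫ s in Ioi (0:ℝ), ∑ i, lA i / (lA i + s) * s ^ (q-1))
        ≤ ∫ s in Ioi (0:ℝ), ((∑ i, lB i / (lB i + s) * s ^ (q-1))
            + ∑ i, lC i / (lC i + s) * s ^ (q-1)) := by
      refine setIntegral_mono_on hintA (hintB.add hintC) measurableSet_Ioi ?_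
      intro s hs
      have hs0 : (0:ℝ) < s := hs
      have hptA : (∑ i, lA i / (lA i + s) * s ^ (q-1))
          = (∑ i, lA i / (lA i + s)) * s ^ (q-1) := (Finset.sum_mul _ _ _).symm
      have hptB : (∑ i, lB i / (lB i + s) * s ^ (q-1))
          = (∑ i, lB i / (lB i + s)) * s ^ (q-1) := (Finset.sum_mul _ _ _).symm
      have hptC : (∑ i, lC i / (lC i + s) * s ^ (q-1))
          = (∑ i, lC i / (lC i + s)) * s ^ (q-1) := (Finset.sum_mul _ _ _).symm
      rw [hptA, hptB, hptC, ← add_mul]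
      exact mul_le_mul_of_nonneg_right (McCarthy.eig_s hB hC hs0)
        (Real.rpow_nonneg hs0.le _)
    rw [integral_add hintB hintC] at hmono
    rw [← McCarthy.sum_F_integral hq0 hlt hA, ← McCarthy.sum_F_integral hq0 hlt hB,
      ← McCarthy.sum_F_integral hq0 hlt hC] at hmono
    have hfin : (∑ i, lA i ^ q) * McCarthy.Iq q
        ≤ (∑ i, lB i ^ q + ∑ i, lC i ^ q) * McCarthy.Iq q := by
      rw [add_mul]; exact hmono
    exact le_of_mul_le_mul_right hfin hIpos
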